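/- (μ-independent convergence of damped PFASST.) Define P̂₂(μ) = I_{LMN} − 2μ (I_L ⊗ Q_Δ ⊗ A) and T₂(μ) = I_{LMN} − P̂₂(μ)^{-1} C(μ). Assume Q, Q_Δ, A, Q̃_Δ and Ã are invertible and that ‖ I_L ⊗ (I_M − Q_Δ^{-1} Q) ⊗ I_N ‖ < 1. Then there exist constants c > 0 and μ* > 0 such that for all μ ≥ μ* and all integers k ≥ 1, the PFASST iteration matrix with k damped pre-smoothing steps satisfies ‖ ( C(μ)^{-1} − T_C^F P̃(μ)^{-1} T_F^C ) · C(μ) · T₂(μ)^k ‖ ≤ c · √(8/(kπ)); in particular the bound tends to zero as k → ∞, independently of μ. -/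

import Mathlib

set_option synthInstance.maxHeartbeats 1000000
set_option maxHeartbeats 1000000


/-!
STATEMENT 18 (μ-independent convergence of damped PFASST): With
P̂₂(μ) = I − 2μ (I_L ⊗ Q_Δ ⊗ A) and T₂(μ) = I − P̂₂(μ)⁻¹ C(μ), assume Q, Q_Δ, A,
Q̃_Δ and Ã are invertible and ‖I_L ⊗ (I_M − Q_Δ⁻¹Q) ⊗ I_N‖ < 1. Then there exist
c > 0 and μ* > 0 such that for all μ ≥ μ* and all k ≥ 1,
‖ (C(μ)⁻¹ − T_C^F P̃(μ)⁻¹ T_F^C) · C(μ) · T₂(μ)^k ‖ ≤ c · √(8/(kπ)).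
-/

noncomputable section

open Matrix
open scoped Kronecker

/-- Complexification of a real matrix. -/
def cmplx {m n : Type*} (A : Matrix m n ℝ) : Matrix m n ℂ := A.map (fun x => (x : ℂ))

/-- The matrix `E` with ones on the first subdiagonal and zeros elsewhere. -/
def Emat (L : ℕ) : Matrix (Fin L) (Fin L) ℂ :=
  Matrix.of fun i j => if (i : ℕ) = (j : ℕ) + 1 then 1 else 0

/-- The matrix `N_M` whose last column consists of ones, all other entries zero. -/
def Nmat (M : ℕ) : Matrix (Fin M) (Fin M) ℂ :=
  Matrix.of fun _ j => if (j : ℕ) = M - 1 then 1 else 0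

/-- `H = N_M ⊗ I_N`. -/
def Hmat (M N : ℕ) : Matrix (Fin M × Fin N) (Fin M × Fin N) ℂ :=
  Nmat M ⊗ₖ (1 : Matrix (Fin N) (Fin N) ℂ)

/-- `E ⊗ H`. -/
def EH (L M N : ℕ) : Matrix (Fin L × Fin M × Fin N) (Fin L × Fin M × Fin N) ℂ :=
  Emat L ⊗ₖ Hmat M N

/-- The composite collocation matrix `C(μ) = I − μ (I_L ⊗ Q ⊗ A) − E ⊗ H`. -/
def Cmat (L : ℕ) {M N : ℕ} (Q : Matrix (Fin M) (Fin M) ℝ) (A : Matrix (Fin N) (Fin N) ℂ)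
    (μ : ℝ) : Matrix (Fin L × Fin M × Fin N) (Fin L × Fin M × Fin N) ℂ :=
  1 - (μ : ℂ) • ((1 : Matrix (Fin L) (Fin L) ℂ) ⊗ₖ (cmplx Q ⊗ₖ A)) - EH L M N

/-- The approximative block Jacobi preconditioner `P̂(μ) = I − μ (I_L ⊗ Q_Δ ⊗ A)`. -/
def Phat (L : ℕ) {M N : ℕ} (QΔ : Matrix (Fin M) (Fin M) ℝ) (A : Matrix (Fin N) (Fin N) ℂ)
    (μ : ℝ) : Matrix (Fin L × Fin M × Fin N) (Fin L × Fin M × Fin N) ℂ :=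
  1 - (μ : ℂ) • ((1 : Matrix (Fin L) (Fin L) ℂ) ⊗ₖ (cmplx QΔ ⊗ₖ A))

/-- The smoother iteration matrix `T_S(μ) = I − P̂(μ)⁻¹ C(μ)`. -/
def Tsmooth (L : ℕ) {M N : ℕ} (Q QΔ : Matrix (Fin M) (Fin M) ℝ)
    (A : Matrix (Fin N) (Fin N) ℂ) (μ : ℝ) :
    Matrix (Fin L × Fin M × Fin N) (Fin L × Fin M × Fin N) ℂ :=
  1 - (Phat L QΔ A μ)⁻¹ * Cmat L Q A μ

/-- Restriction operator `T_F^C = I_L ⊗ T_{F,Q}^C ⊗ T_{F,A}^C`. -/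
def TFCmat (L : ℕ) {M N M' N' : ℕ} (TFQ : Matrix (Fin M') (Fin M) ℝ)
    (TFA : Matrix (Fin N') (Fin N) ℂ) :
    Matrix (Fin L × Fin M' × Fin N') (Fin L × Fin M × Fin N) ℂ :=
  (1 : Matrix (Fin L) (Fin L) ℂ) ⊗ₖ (cmplx TFQ ⊗ₖ TFA)

/-- Interpolation operator `T_C^F = I_L ⊗ T_{C,Q}^F ⊗ T_{C,A}^F`. -/
def TCFmat (L : ℕ) {M N M' N' : ℕ} (TCQ : Matrix (Fin M) (Fin M') ℝ)
    (TCA : Matrix (Fin N) (Fin N') ℂ) :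
    Matrix (Fin L × Fin M × Fin N) (Fin L × Fin M' × Fin N') ℂ :=
  (1 : Matrix (Fin L) (Fin L) ℂ) ⊗ₖ (cmplx TCQ ⊗ₖ TCA)

/-- The coarse approximative block Gauss-Seidel preconditioner
`P̃(μ) = I − μ (I_L ⊗ Q̃_Δ ⊗ Ã) − E ⊗ H̃`. -/
def Ptilde (L : ℕ) {M' N' : ℕ} (QΔt : Matrix (Fin M') (Fin M') ℝ)
    (At : Matrix (Fin N') (Fin N') ℂ) (μ : ℝ) :
    Matrix (Fin L × Fin M' × Fin N') (Fin L × Fin M' × Fin N') ℂ :=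
  1 - (μ : ℂ) • ((1 : Matrix (Fin L) (Fin L) ℂ) ⊗ₖ (cmplx QΔt ⊗ₖ At)) - EH L M' N'

/-- The coarse-grid correction iteration matrix
`T_CGC(μ) = I − T_C^F P̃(μ)⁻¹ T_F^C C(μ)`. -/
def Tcgc (L : ℕ) {M N M' N' : ℕ} (Q : Matrix (Fin M) (Fin M) ℝ)
    (A : Matrix (Fin N) (Fin N) ℂ)
    (QΔt : Matrix (Fin M') (Fin M') ℝ) (At : Matrix (Fin N') (Fin N') ℂ)
    (TFQ : Matrix (Fin M') (Fin M) ℝ) (TFA : Matrix (Fin N') (Fin N) ℂ)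
    (TCQ : Matrix (Fin M) (Fin M') ℝ) (TCA : Matrix (Fin N) (Fin N') ℂ) (μ : ℝ) :
    Matrix (Fin L × Fin M × Fin N) (Fin L × Fin M × Fin N) ℂ :=
  1 - TCFmat L TCQ TCA * (Ptilde L QΔt At μ)⁻¹ * TFCmat L TFQ TFA * Cmat L Q A μ

/-- The damped block Jacobi preconditioner `P̂₂(μ) = I − 2μ (I_L ⊗ Q_Δ ⊗ A)`. -/
def Phat2 (L : ℕ) {M N : ℕ} (QΔ : Matrix (Fin M) (Fin M) ℝ) (A : Matrix (Fin N) (Fin N) ℂ)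
    (μ : ℝ) : Matrix (Fin L × Fin M × Fin N) (Fin L × Fin M × Fin N) ℂ :=
  1 - ((2 * μ : ℝ) : ℂ) • ((1 : Matrix (Fin L) (Fin L) ℂ) ⊗ₖ (cmplx QΔ ⊗ₖ A))

/-- The damped smoother iteration matrix `T₂(μ) = I − P̂₂(μ)⁻¹ C(μ)`. -/
def Tdamped (L : ℕ) {M N : ℕ} (Q QΔ : Matrix (Fin M) (Fin M) ℝ)
    (A : Matrix (Fin N) (Fin N) ℂ) (μ : ℝ) :
    Matrix (Fin L × Fin M × Fin N) (Fin L × Fin M × Fin N) ℂ :=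
  1 - (Phat2 L QΔ A μ)⁻¹ * Cmat L Q A μ

/-- The operator norm induced by the Euclidean vector norm. -/
def opNorm {n : Type*} [Fintype n] [DecidableEq n] (A : Matrix n n ℂ) : ℝ :=
  ‖Matrix.toEuclideanCLM (𝕜 := ℂ) A‖


/-! ### Auxiliary lemmas -/

section AuxOpNorm

variable {n : Type*} [Fintype n] [DecidableEq n]

lemma opNorm_nonneg (A : Matrix n n ℂ) : 0 ≤ opNorm A := norm_nonneg _

lemma opNorm_mul_le (A B : Matrix n n ℂ) : opNorm (A*B) ≤ opNorm A * opNorm B := by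
  simp only [opNorm, _root_.map_mul]; exact norm_mul_le _ _

lemma opNorm_pow_le (A : Matrix n n ℂ) {k : ℕ} (hk : 1 ≤ k) : opNorm (A^k) ≤ (opNorm A)^k := by
  simp only [opNorm, _root_.map_pow]; exact norm_pow_le' _ hk

lemma opNorm_add_le (A B : Matrix n n ℂ) : opNorm (A+B) ≤ opNorm A + opNorm B := by
  simp only [opNorm, _root_.map_add]; exact norm_add_le _ _

lemma opNorm_smul (c : ℂ) (A : Matrix n n ℂ) : opNorm (c • A) = ‖c‖ * opNorm A := by
  simp only [opNorm, _root_.map_smul]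
  exact norm_smul c (Matrix.toEuclideanCLM (𝕜 := ℂ) A)

lemma opNorm_one_le : opNorm (1 : Matrix n n ℂ) ≤ 1 := by
  simp only [opNorm, _root_.map_one]
  rw [ContinuousLinearMap.one_def]
  exact ContinuousLinearMap.norm_id_le

lemma opNorm_continuous : Continuous (opNorm (n := n)) := by
  have h : Continuous (fun A : Matrix n n ℂ => (Matrix.toEuclideanCLM (𝕜 := ℂ) A :
      EuclideanSpace ℂ n →L[ℂ] EuclideanSpace ℂ n)) := by
    let lm : Matrix n n ℂ →ₗ[ℂ] (EuclideanSpace ℂ n →L[ℂ] EuclideanSpace ℂ n) :=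
      { toFun := fun A => Matrix.toEuclideanCLM (𝕜 := ℂ) A
        map_add' := fun a b => map_add _ a b
        map_smul' := fun c a => map_smul _ c a }
    exact lm.continuous_of_finiteDimensional
  exact continuous_norm.comp h

lemma matSmulInv (c : ℂ) (hc : c ≠ 0) (X : Matrix n n ℂ) (h : IsUnit X.det) :
    (c • X)⁻¹ = c⁻¹ • X⁻¹ := by
  refine Matrix.inv_eq_left_inv ?_
  rw [Matrix.smul_mul, Matrix.mul_smul, smul_smul, inv_mul_cancel₀ hc, one_smul,
    Matrix.nonsing_inv_mul _ h]

lemma isUnit_smul' (c : ℂ) (hc : c ≠ 0) {X : Matrix n n ℂ} (h : IsUnit X) : IsUnit (c • X) := by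
  rw [Matrix.isUnit_iff_isUnit_det, Matrix.det_smul, isUnit_iff_ne_zero]
  have hd : X.det ≠ 0 := by
    simpa [isUnit_iff_ne_zero] using (Matrix.isUnit_iff_isUnit_det X).mp h
  exact mul_ne_zero (pow_ne_zero _ hc) hd

lemma isUnit_det_ne_zero {X : Matrix n n ℂ} (h : IsUnit X) : X.det ≠ 0 := by
  simpa [isUnit_iff_ne_zero] using (Matrix.isUnit_iff_isUnit_det X).mp h

lemma ev_det_ne {f : ℂ → Matrix n n ℂ} (hf : Continuous f) (h : IsUnit (f 0)) :
    ∀ᶠ z in nhds (0:ℂ), (f z).det ≠ 0 :=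
  (hf.matrix_det.continuousAt).eventually_ne (isUnit_det_ne_zero h)

lemma contAt_mul {X : Type*} [TopologicalSpace X] {m p : Type*}
    {f : X → Matrix m n ℂ} {g : X → Matrix n p ℂ} {x : X}
    (hf : ContinuousAt f x) (hg : ContinuousAt g x) :
    ContinuousAt (fun y => f y * g y) x := by
  have hp : ContinuousAt (fun y => (f y, g y)) x := hf.prodMk hg
  exact ((continuous_fst.matrix_mul continuous_snd).continuousAt).comp hp

lemma contAt_inv {f : ℂ → Matrix n n ℂ} (hf : Continuous f) (h : IsUnit (f 0)) :
    ContinuousAt (fun z => (f z)⁻¹) 0 := by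
  have h1 : ContinuousAt Inv.inv (f 0) := by
    apply continuousAt_matrix_inv
    rw [Ring.inverse_eq_inv']
    exact continuousAt_inv₀ (isUnit_det_ne_zero h)
  exact h1.comp hf.continuousAt

end AuxOpNorm

section AuxCmplx

lemma cmplx_mul {m p q : Type*} [Fintype p] (X : Matrix m p ℝ) (Y : Matrix p q ℝ) :
    cmplx (X * Y) = cmplx X * cmplx Y := by
  ext i j
  simp only [cmplx, Matrix.map_apply, Matrix.mul_apply]
  push_cast
  rfl

lemma cmplx_one {n : Type*} [Fintype n] [DecidableEq n] : cmplx (1 : Matrix n n ℝ) = 1 := by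
  simpa [cmplx] using Matrix.map_one (⇑Complex.ofRealHom) (map_zero _) (map_one _)

lemma cmplx_sub {m p : Type*} (X Y : Matrix m p ℝ) : cmplx (X - Y) = cmplx X - cmplx Y := by
  ext i j; simp [cmplx]

/-- `I_L ⊗ P ⊗ A` as a single Kronecker product. -/
def Kron3 (L : ℕ) {M N : ℕ} (P : Matrix (Fin M) (Fin M) ℝ) (A : Matrix (Fin N) (Fin N) ℂ) :
    Matrix (Fin L × Fin M × Fin N) (Fin L × Fin M × Fin N) ℂ :=
  (1 : Matrix (Fin L) (Fin L) ℂ) ⊗ₖ (cmplx P ⊗ₖ A)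

lemma Kron3_mul (L : ℕ) {M N : ℕ} (P P' : Matrix (Fin M) (Fin M) ℝ)
    (A A' : Matrix (Fin N) (Fin N) ℂ) :
    Kron3 L P A * Kron3 L P' A' = Kron3 L (P * P') (A * A') := by
  unfold Kron3
  rw [← Matrix.mul_kronecker_mul, ← Matrix.mul_kronecker_mul, one_mul, cmplx_mul]

lemma Kron3_one (L : ℕ) {M N : ℕ} : Kron3 L (1 : Matrix (Fin M) (Fin M) ℝ)
    (1 : Matrix (Fin N) (Fin N) ℂ) = 1 := by
  unfold Kron3
  rw [cmplx_one, Matrix.one_kronecker_one, Matrix.one_kronecker_one]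

lemma Kron3_isUnit (L : ℕ) {M N : ℕ} {P : Matrix (Fin M) (Fin M) ℝ}
    {A : Matrix (Fin N) (Fin N) ℂ} (hP : IsUnit P) (hA : IsUnit A) :
    IsUnit (Kron3 L P A) := by
  have hPd := (Matrix.isUnit_iff_isUnit_det P).mp hP
  have hAd := (Matrix.isUnit_iff_isUnit_det A).mp hA
  have h1 : Kron3 L P A * Kron3 L P⁻¹ A⁻¹ = 1 := by
    rw [Kron3_mul, Matrix.mul_nonsing_inv _ hPd, Matrix.mul_nonsing_inv _ hAd, Kron3_one]
  have h2 : Kron3 L P⁻¹ A⁻¹ * Kron3 L P A = 1 := by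
    rw [Kron3_mul, Matrix.nonsing_inv_mul _ hPd, Matrix.nonsing_inv_mul _ hAd, Kron3_one]
  exact ⟨⟨_, _, h1, h2⟩, rfl⟩

lemma Kron3_inv (L : ℕ) {M N : ℕ} {P : Matrix (Fin M) (Fin M) ℝ}
    {A : Matrix (Fin N) (Fin N) ℂ} (hP : IsUnit P) (hA : IsUnit A) :
    (Kron3 L P A)⁻¹ = Kron3 L P⁻¹ A⁻¹ := by
  apply Matrix.inv_eq_right_inv
  rw [Kron3_mul, Matrix.mul_nonsing_inv _ ((Matrix.isUnit_iff_isUnit_det P).mp hP),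
    Matrix.mul_nonsing_inv _ ((Matrix.isUnit_iff_isUnit_det A).mp hA), Kron3_one]

lemma kronecker_sub' {l m n p : Type*} (A : Matrix l m ℂ) (B C : Matrix n p ℂ) :
    A ⊗ₖ (B - C) = A ⊗ₖ B - A ⊗ₖ C := by
  ext ⟨i, j⟩ ⟨k, l⟩
  simp [Matrix.kroneckerMap_apply, mul_sub]

lemma sub_kronecker' {l m n p : Type*} (A B : Matrix l m ℂ) (C : Matrix n p ℂ) :
    (A - B) ⊗ₖ C = A ⊗ₖ C - B ⊗ₖ C := by
  ext ⟨i, j⟩ ⟨k, l⟩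
  simp [Matrix.kroneckerMap_apply, sub_mul]

lemma Kron3_one_sub (L : ℕ) {M N : ℕ} (X : Matrix (Fin M) (Fin M) ℝ) :
    Kron3 L (1 - X) (1 : Matrix (Fin N) (Fin N) ℂ) = 1 - Kron3 L X 1 := by
  unfold Kron3
  rw [cmplx_sub, cmplx_one, sub_kronecker', kronecker_sub',
    Matrix.one_kronecker_one, Matrix.one_kronecker_one]

end AuxCmplx

lemma key_numeric {q D : ℝ} (hq0 : 0 < q) (hq1 : q < 1) (hD : 0 ≤ D) :
    ∃ c > (0:ℝ), ∀ k : ℕ, 1 ≤ k → D * q ^ k ≤ c * Real.sqrt (8 / (k * Real.pi)) := by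
  have h1q : (0:ℝ) < 1 - q := by linarith
  have hcoef : 0 ≤ D * q / (1 - q) :=
    div_nonneg (mul_nonneg hD hq0.le) h1q.le
  have hcoef2 : 0 ≤ D * q / (1 - q) * Real.sqrt (Real.pi / 8) :=
    mul_nonneg hcoef (Real.sqrt_nonneg _)
  refine ⟨D * q / (1 - q) * Real.sqrt (Real.pi / 8) + 1, by linarith, ?_⟩
  intro k hk
  have hkR : (1:ℝ) ≤ (k:ℝ) := by exact_mod_cast hk
  have hk0 : (0:ℝ) < (k:ℝ) := by linarith
  have ha : 0 < 1/q - 1 := sub_pos.mpr (one_lt_one_div hq0 hq1)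
  have hber : (k:ℝ) * (1/q - 1) ≤ (1/q)^k := by
    have h1 := one_add_mul_le_pow (a := 1/q - 1) (by linarith) k
    have h2 : 1 + (1/q - 1) = 1/q := by ring
    calc (k:ℝ)*(1/q-1) ≤ 1 + (k:ℝ)*(1/q-1) := by linarith
      _ ≤ (1 + (1/q-1))^k := by simpa [mul_comm] using h1
      _ = (1/q)^k := by rw [h2]
  have hqk : q^k ≤ 1 / ((k:ℝ) * (1/q - 1)) := by
    have hpos : 0 < (k:ℝ)*(1/q-1) := by positivity
    rw [le_div_iff₀ hpos]
    calc q^k * ((k:ℝ)*(1/q-1)) ≤ q^k * (1/q)^k :=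
          mul_le_mul_of_nonneg_left hber (pow_nonneg hq0.le k)
      _ = 1 := by
          rw [← mul_pow, mul_one_div, div_self (ne_of_gt hq0), one_pow]
  have hsq1 : (1:ℝ) ≤ Real.sqrt k := Real.one_le_sqrt.mpr hkR
  have hsqpos : (0:ℝ) < Real.sqrt k := by linarith
  have hsqk : Real.sqrt k * Real.sqrt k = (k:ℝ) := Real.mul_self_sqrt hk0.le
  have hstep1 : D * q ^ k ≤ (D * q / (1 - q)) * (1 / (k:ℝ)) := by
    have hle := mul_le_mul_of_nonneg_left hqk hD
    calc D * q ^ k ≤ D * (1 / ((k:ℝ) * (1/q - 1))) := hle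
      _ = (D * q / (1 - q)) * (1 / (k:ℝ)) := by
          have h1 : q ≠ 0 := ne_of_gt hq0
          have h3 : (k:ℝ) ≠ 0 := ne_of_gt hk0
          rw [show 1/q - 1 = (1 - q)/q by field_simp]
          field_simp
  have hstep2 : (1:ℝ) / (k:ℝ) ≤ 1 / Real.sqrt k := by
    apply one_div_le_one_div_of_le hsqpos
    nlinarith
  have hstep3 : D * q ^ k ≤ (D * q / (1 - q)) * (1 / Real.sqrt k) :=
    hstep1.trans (mul_le_mul_of_nonneg_left hstep2 hcoef)
  have hπ : (0:ℝ) < Real.pi := Real.pi_pos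
  have hsqrt8 : Real.sqrt (Real.pi/8) * Real.sqrt (8/Real.pi) = 1 := by
    rw [← Real.sqrt_mul (by positivity)]
    rw [show (Real.pi/8) * (8/Real.pi) = 1 by field_simp]
    exact Real.sqrt_one
  have hrhs : Real.sqrt (8 / ((k:ℝ) * Real.pi)) = Real.sqrt (8/Real.pi) * (1 / Real.sqrt k) := by
    rw [show (8:ℝ) / ((k:ℝ) * Real.pi) = (8/Real.pi) / (k:ℝ) by field_simp]
    rw [Real.sqrt_div (by positivity) (k:ℝ)]
    ring
  rw [hrhs]
  have hkey : D * q / (1 - q) ≤ (D * q / (1 - q) * Real.sqrt (Real.pi/8)) * Real.sqrt (8/Real.pi) := by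
    rw [mul_assoc, hsqrt8, mul_one]
  calc D * q ^ k ≤ (D * q / (1 - q)) * (1 / Real.sqrt k) := hstep3
    _ ≤ ((D * q / (1 - q) * Real.sqrt (Real.pi/8)) * Real.sqrt (8/Real.pi)) * (1/Real.sqrt k) := by
        apply mul_le_mul_of_nonneg_right hkey (by positivity)
    _ ≤ (D * q / (1 - q) * Real.sqrt (Real.pi/8) + 1) * (Real.sqrt (8/Real.pi) * (1 / Real.sqrt k)) := by
        rw [mul_assoc]
        apply mul_le_mul_of_nonneg_right (by linarith) (by positivity)

theorem stmt_18 (L M N M' N' : ℕ) (hL : 0 < L) (hM : 0 < M) (hN : 0 < N)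
    (hM' : 0 < M') (hN' : 0 < N')
    (Q QΔ : Matrix (Fin M) (Fin M) ℝ) (A : Matrix (Fin N) (Fin N) ℂ)
    (QΔt : Matrix (Fin M') (Fin M') ℝ) (At : Matrix (Fin N') (Fin N') ℂ)
    (TFQ : Matrix (Fin M') (Fin M) ℝ) (TFA : Matrix (Fin N') (Fin N) ℂ)
    (TCQ : Matrix (Fin M) (Fin M') ℝ) (TCA : Matrix (Fin N) (Fin N') ℂ)
    (hQ : IsUnit Q) (hQΔ : IsUnit QΔ) (hA : IsUnit A)
    (hQΔt : IsUnit QΔt) (hAt : IsUnit At)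
    (hB : opNorm ((1 : Matrix (Fin L) (Fin L) ℂ) ⊗ₖ
        (cmplx ((1 : Matrix (Fin M) (Fin M) ℝ) - QΔ⁻¹ * Q) ⊗ₖ
          (1 : Matrix (Fin N) (Fin N) ℂ))) < 1) :
    ∃ c > (0 : ℝ), ∃ μs > (0 : ℝ), ∀ μ : ℝ, μs ≤ μ → ∀ k : ℕ, 1 ≤ k →
      IsUnit (Cmat L Q A μ) ∧ IsUnit (Phat2 L QΔ A μ) ∧ IsUnit (Ptilde L QΔt At μ) ∧
      opNorm (((Cmat L Q A μ)⁻¹ -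
            TCFmat L TCQ TCA * (Ptilde L QΔt At μ)⁻¹ * TFCmat L TFQ TFA) *
          Cmat L Q A μ * (Tdamped L Q QΔ A μ) ^ k) ≤
        c * Real.sqrt (8 / (k * Real.pi)) := by
  classical
  -- units of the Kronecker building blocks
  have hK2 : IsUnit (Kron3 L QΔ A) := Kron3_isUnit L hQΔ hA
  have hKQ : IsUnit (Kron3 L Q A) := Kron3_isUnit L hQ hA
  have hKt : IsUnit (Kron3 L QΔt At) := Kron3_isUnit L hQΔt hAt
  -- the rescaled smoother and CGC maps, as functions of z = 1/μ
  set F : ℂ → Matrix (Fin L × Fin M × Fin N) (Fin L × Fin M × Fin N) ℂ :=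
    fun z => 1 - (z • 1 - (2:ℂ) • Kron3 L QΔ A)⁻¹ *
      (z • 1 - Kron3 L Q A - z • EH L M N) with hFdef
  set G : ℂ → Matrix (Fin L × Fin M × Fin N) (Fin L × Fin M × Fin N) ℂ :=
    fun z => 1 - TCFmat L TCQ TCA * (z • 1 - Kron3 L QΔt At - z • EH L M' N')⁻¹ *
      TFCmat L TFQ TFA * (z • 1 - Kron3 L Q A - z • EH L M N) with hGdef
  -- continuity of the three matrix pencils
  have hc1 : Continuous (fun z : ℂ =>
      z • (1 : Matrix (Fin L × Fin M × Fin N) (Fin L × Fin M × Fin N) ℂ)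
        - (2:ℂ) • Kron3 L QΔ A) :=
    (continuous_id.smul continuous_const).sub continuous_const
  have hc2 : Continuous (fun z : ℂ =>
      z • (1 : Matrix (Fin L × Fin M × Fin N) (Fin L × Fin M × Fin N) ℂ)
        - Kron3 L Q A - z • EH L M N) :=
    ((continuous_id.smul continuous_const).sub continuous_const).sub
      (continuous_id.smul continuous_const)
  have hc3 : Continuous (fun z : ℂ =>
      z • (1 : Matrix (Fin L × Fin M' × Fin N') (Fin L × Fin M' × Fin N') ℂ)
        - Kron3 L QΔt At - z • EH L M' N') :=
    ((continuous_id.smul continuous_const).sub continuous_const).sub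
      (continuous_id.smul continuous_const)
  -- units at z = 0
  have hu1 : IsUnit ((fun z : ℂ =>
      z • (1 : Matrix (Fin L × Fin M × Fin N) (Fin L × Fin M × Fin N) ℂ)
        - (2:ℂ) • Kron3 L QΔ A) 0) := by
    simp only [zero_smul, zero_sub]
    rw [← neg_smul]
    exact isUnit_smul' _ (by norm_num) hK2
  have hu2 : IsUnit ((fun z : ℂ =>
      z • (1 : Matrix (Fin L × Fin M × Fin N) (Fin L × Fin M × Fin N) ℂ)
        - Kron3 L Q A - z • EH L M N) 0) := by
    simp only [zero_smul, zero_sub, sub_zero]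
    exact hKQ.neg
  have hu3 : IsUnit ((fun z : ℂ =>
      z • (1 : Matrix (Fin L × Fin M' × Fin N') (Fin L × Fin M' × Fin N') ℂ)
        - Kron3 L QΔt At - z • EH L M' N') 0) := by
    simp only [zero_smul, zero_sub, sub_zero]
    exact hKt.neg
  -- eventually nonzero determinants
  have hev1 := ev_det_ne hc1 hu1
  have hev2 := ev_det_ne hc2 hu2
  have hev3 := ev_det_ne hc3 hu3
  -- continuity of F and G at 0
  have hFc : ContinuousAt F 0 := by
    rw [hFdef]
    exact continuousAt_const.sub ((contAt_inv hc1 hu1).mul hc2.continuousAt)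
  have hGc : ContinuousAt G 0 := by
    have hinv3 : ContinuousAt (fun z : ℂ =>
        (z • (1 : Matrix (Fin L × Fin M' × Fin N') (Fin L × Fin M' × Fin N') ℂ)
          - Kron3 L QΔt At - z • EH L M' N')⁻¹) 0 := contAt_inv hc3 hu3
    have hmid : ContinuousAt (fun z : ℂ => TCFmat L TCQ TCA *
        (z • (1 : Matrix (Fin L × Fin M' × Fin N') (Fin L × Fin M' × Fin N') ℂ)
          - Kron3 L QΔt At - z • EH L M' N')⁻¹ * TFCmat L TFQ TFA) 0 :=
      contAt_mul (contAt_mul continuousAt_const hinv3) continuousAt_const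
    have hfin : ContinuousAt (fun z : ℂ => TCFmat L TCQ TCA *
        (z • (1 : Matrix (Fin L × Fin M' × Fin N') (Fin L × Fin M' × Fin N') ℂ)
          - Kron3 L QΔt At - z • EH L M' N')⁻¹ * TFCmat L TFQ TFA *
        (z • (1 : Matrix (Fin L × Fin M × Fin N) (Fin L × Fin M × Fin N) ℂ)
          - Kron3 L Q A - z • EH L M N)) 0 := contAt_mul hmid hc2.continuousAt
    rw [hGdef]
    exact continuousAt_const.sub hfin
  -- value of F at 0
  have hF0 : F 0 = 1 - (2⁻¹ : ℂ) • Kron3 L (QΔ⁻¹ * Q) (1 : Matrix (Fin N) (Fin N) ℂ) := by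
    rw [hFdef]
    simp only [zero_smul, zero_sub, sub_zero]
    rw [← neg_smul, matSmulInv _ (by norm_num) _ ((Matrix.isUnit_iff_isUnit_det _).mp hK2),
      Kron3_inv L hQΔ hA, Matrix.smul_mul, mul_neg, smul_neg, ← neg_smul, Kron3_mul,
      Matrix.nonsing_inv_mul _ ((Matrix.isUnit_iff_isUnit_det A).mp hA)]
    norm_num
  -- the matrix B from the hypothesis
  have hBm : Kron3 L (QΔ⁻¹ * Q) (1 : Matrix (Fin N) (Fin N) ℂ) =
      1 - Kron3 L ((1 : Matrix (Fin M) (Fin M) ℝ) - QΔ⁻¹ * Q) 1 := by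
    rw [Kron3_one_sub, sub_sub_cancel]
  have hBhyp : opNorm (Kron3 L ((1 : Matrix (Fin M) (Fin M) ℝ) - QΔ⁻¹ * Q)
      (1 : Matrix (Fin N) (Fin N) ℂ)) < 1 := hB
  set nB : ℝ := opNorm (Kron3 L ((1 : Matrix (Fin M) (Fin M) ℝ) - QΔ⁻¹ * Q)
      (1 : Matrix (Fin N) (Fin N) ℂ)) with hnB
  have hnB0 : 0 ≤ nB := opNorm_nonneg _
  -- bound at 0 : opNorm (F 0) ≤ (1 + nB)/2
  have hF0split : F 0 = (2⁻¹ : ℂ) • (1 : Matrix (Fin L × Fin M × Fin N)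
      (Fin L × Fin M × Fin N) ℂ) + (2⁻¹ : ℂ) • Kron3 L
        ((1 : Matrix (Fin M) (Fin M) ℝ) - QΔ⁻¹ * Q) 1 := by
    rw [hF0, hBm]
    module
  have hF0le : opNorm (F 0) ≤ (1 + nB)/2 := by
    rw [hF0split]
    have h1 := opNorm_add_le ((2⁻¹ : ℂ) • (1 : Matrix (Fin L × Fin M × Fin N)
      (Fin L × Fin M × Fin N) ℂ)) ((2⁻¹ : ℂ) • Kron3 L
        ((1 : Matrix (Fin M) (Fin M) ℝ) - QΔ⁻¹ * Q) 1)
    rw [opNorm_smul, opNorm_smul] at h1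
    have hhalf : ‖(2⁻¹ : ℂ)‖ = 1/2 := by norm_num
    rw [hhalf] at h1
    have h2 : opNorm (1 : Matrix (Fin L × Fin M × Fin N) (Fin L × Fin M × Fin N) ℂ) ≤ 1 :=
      opNorm_one_le
    calc opNorm _ ≤ 1/2 * opNorm (1 : Matrix (Fin L × Fin M × Fin N)
          (Fin L × Fin M × Fin N) ℂ) + 1/2 * nB := h1
      _ ≤ (1 + nB)/2 := by linarith
  -- the contraction factor
  set q : ℝ := ((1 + nB)/2 + 1)/2 with hqdef
  have hq0 : 0 < q := by rw [hqdef]; linarith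
  have hq1 : q < 1 := by rw [hqdef]; linarith
  have hF0lt : opNorm (F 0) < q := lt_of_le_of_lt hF0le (by rw [hqdef]; linarith)
  -- the CGC bound
  set D : ℝ := opNorm (G 0) + 1 with hDdef
  have hD0 : 0 < D := by
    have := opNorm_nonneg (G 0)
    rw [hDdef]; linarith
  have hG0lt : opNorm (G 0) < D := by rw [hDdef]; linarith
  -- eventually bounds
  have hFev : ∀ᶠ z in nhds (0:ℂ), opNorm (F z) < q := by
    have ht : Filter.Tendsto (fun z => opNorm (F z)) (nhds 0) (nhds (opNorm (F 0))) :=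
      (opNorm_continuous.continuousAt).comp hFc
    exact ht.eventually_lt_const hF0lt
  have hGev : ∀ᶠ z in nhds (0:ℂ), opNorm (G z) < D := by
    have ht : Filter.Tendsto (fun z => opNorm (G z)) (nhds 0) (nhds (opNorm (G 0))) :=
      (opNorm_continuous.continuousAt).comp hGc
    exact ht.eventually_lt_const hG0lt
  obtain ⟨δ, hδpos, hδ⟩ := Metric.eventually_nhds_iff.mp
    (hev1.and (hev2.and (hev3.and (hFev.and hGev))))
  obtain ⟨c, hcpos, hcbound⟩ := key_numeric hq0 hq1 hD0.le
  refine ⟨c, hcpos, max 1 (2/δ), lt_of_lt_of_le one_pos (le_max_left _ _), ?_⟩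
  intro μ hμ k hk
  have hμ1 : (1:ℝ) ≤ μ := le_trans (le_max_left _ _) hμ
  have hμpos : (0:ℝ) < μ := lt_of_lt_of_le one_pos hμ1
  have hμne : μ ≠ 0 := ne_of_gt hμpos
  have hμδ : 2/δ ≤ μ := le_trans (le_max_right _ _) hμ
  set z : ℂ := ((μ⁻¹ : ℝ) : ℂ) with hzdef
  have hzd : dist z 0 < δ := by
    rw [dist_zero_right, hzdef, Complex.norm_real, Real.norm_eq_abs,
      abs_of_pos (inv_pos.mpr hμpos)]
    have h2δ : (0:ℝ) < 2/δ := by positivity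
    have hinv : μ⁻¹ ≤ (2/δ)⁻¹ := inv_anti₀ h2δ hμδ
    rw [inv_div] at hinv
    linarith
  obtain ⟨hd1, hd23⟩ := hδ hzd
  obtain ⟨hd2, hd34⟩ := hd23
  obtain ⟨hd3, hFGz⟩ := hd34
  obtain ⟨hFzq, hGzD⟩ := hFGz
  -- scalar facts
  have hμC : ((μ:ℝ) : ℂ) ≠ 0 := by exact_mod_cast hμne
  have hzmul : ((μ:ℝ) : ℂ) * z = 1 := by
    rw [hzdef, ← Complex.ofReal_mul, mul_inv_cancel₀ hμne, Complex.ofReal_one]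
  -- pencil abbreviations
  set X1 : Matrix (Fin L × Fin M × Fin N) (Fin L × Fin M × Fin N) ℂ :=
    z • 1 - (2:ℂ) • Kron3 L QΔ A with hX1def
  set Y1 : Matrix (Fin L × Fin M × Fin N) (Fin L × Fin M × Fin N) ℂ :=
    z • 1 - Kron3 L Q A - z • EH L M N with hY1def
  set Mt : Matrix (Fin L × Fin M' × Fin N') (Fin L × Fin M' × Fin N') ℂ :=
    z • 1 - Kron3 L QΔt At - z • EH L M' N' with hMtdef
  have hX1u : IsUnit X1 := (Matrix.isUnit_iff_isUnit_det _).mpr (isUnit_iff_ne_zero.mpr hd1)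
  have hY1u : IsUnit Y1 := (Matrix.isUnit_iff_isUnit_det _).mpr (isUnit_iff_ne_zero.mpr hd2)
  have hMtu : IsUnit Mt := (Matrix.isUnit_iff_isUnit_det _).mpr (isUnit_iff_ne_zero.mpr hd3)
  -- rescaling identities
  have hPhat2eq : Phat2 L QΔ A μ = ((μ:ℝ) : ℂ) • X1 := by
    show (1 : Matrix (Fin L × Fin M × Fin N) (Fin L × Fin M × Fin N) ℂ)
      - ((2 * μ : ℝ) : ℂ) • Kron3 L QΔ A = _
    rw [hX1def, _root_.smul_sub, smul_smul, smul_smul, hzmul, one_smul]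
    congr 1
    congr 1
    push_cast
    ring
  have hCeq : Cmat L Q A μ = ((μ:ℝ) : ℂ) • Y1 := by
    show (1 : Matrix (Fin L × Fin M × Fin N) (Fin L × Fin M × Fin N) ℂ)
      - ((μ : ℝ) : ℂ) • Kron3 L Q A - EH L M N = _
    rw [hY1def, _root_.smul_sub, _root_.smul_sub, smul_smul, smul_smul, hzmul, one_smul, one_smul]
  have hPteq : Ptilde L QΔt At μ = ((μ:ℝ) : ℂ) • Mt := by
    show (1 : Matrix (Fin L × Fin M' × Fin N') (Fin L × Fin M' × Fin N') ℂ)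
      - ((μ : ℝ) : ℂ) • Kron3 L QΔt At - EH L M' N' = _
    rw [hMtdef, _root_.smul_sub, _root_.smul_sub, smul_smul, smul_smul, hzmul, one_smul, one_smul]
  -- units
  have hCu : IsUnit (Cmat L Q A μ) := by rw [hCeq]; exact isUnit_smul' _ hμC hY1u
  have hP2u : IsUnit (Phat2 L QΔ A μ) := by rw [hPhat2eq]; exact isUnit_smul' _ hμC hX1u
  have hPtu : IsUnit (Ptilde L QΔt At μ) := by rw [hPteq]; exact isUnit_smul' _ hμC hMtu
  refine ⟨hCu, hP2u, hPtu, ?_⟩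
  -- identification of the damped smoother
  have hTd : Tdamped L Q QΔ A μ = F z := by
    show (1 : Matrix (Fin L × Fin M × Fin N) (Fin L × Fin M × Fin N) ℂ)
      - (Phat2 L QΔ A μ)⁻¹ * Cmat L Q A μ = _
    rw [hPhat2eq, hCeq, matSmulInv _ hμC _ ((Matrix.isUnit_iff_isUnit_det _).mp hX1u),
      Matrix.smul_mul, Matrix.mul_smul, smul_smul, inv_mul_cancel₀ hμC, one_smul]
  -- identification of the CGC part
  have hMain : ((Cmat L Q A μ)⁻¹ -
      TCFmat L TCQ TCA * (Ptilde L QΔt At μ)⁻¹ * TFCmat L TFQ TFA) * Cmat L Q A μ = G z := by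
    rw [Matrix.sub_mul, Matrix.nonsing_inv_mul _ ((Matrix.isUnit_iff_isUnit_det _).mp hCu),
      hPteq, hCeq, matSmulInv _ hμC _ ((Matrix.isUnit_iff_isUnit_det _).mp hMtu),
      Matrix.mul_smul, Matrix.mul_smul, Matrix.smul_mul, Matrix.smul_mul, smul_smul,
      mul_inv_cancel₀ hμC, one_smul]
  rw [hMain, hTd]
  calc opNorm (G z * F z ^ k)
      ≤ opNorm (G z) * opNorm (F z ^ k) := opNorm_mul_le _ _
    _ ≤ opNorm (G z) * (opNorm (F z))^k :=
        mul_le_mul_of_nonneg_left (opNorm_pow_le _ hk) (opNorm_nonneg _)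
    _ ≤ D * q^k :=
        mul_le_mul hGzD.le (pow_le_pow_left₀ (opNorm_nonneg _) hFzq.le k)
          (pow_nonneg (opNorm_nonneg _) k) hD0.le
    _ ≤ c * Real.sqrt (8 / (k * Real.pi)) := hcbound k hk
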